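/- Let S be a G×G positive definite real matrix. Then the function f(Φ) = log det Φ − Tr(ΦS), defined on the set of G×G positive definite real matrices Φ, attains its unique maximum at Φ = S⁻¹: for every positive definite Φ one has f(Φ) ≤ f(S⁻¹) = −log det S − G, with equality if and only if Φ = S⁻¹. -/

import Mathlib

open Matrix

private lemma ldtm_posDef_conj {G : ℕ} {Φ B : Matrix (Fin G) (Fin G) ℝ} (hΦ : Φ.PosDef)
    (hB : B.IsHermitian) (hBdet : IsUnit B.det) : (B * Φ * B).PosDef := by
  refine Matrix.PosDef.of_dotProduct_mulVec_pos ?_ ?_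
  · have : (B * Φ * B)ᴴ = Bᴴ * (Φᴴ * Bᴴ) := by
      rw [conjTranspose_mul, conjTranspose_mul]
    rw [Matrix.IsHermitian, this, hB.eq, hΦ.1.eq, mul_assoc]
  · intro x hx
    have hBx : B *ᵥ x ≠ 0 := by
      intro h
      apply hx
      have : B⁻¹ *ᵥ (B *ᵥ x) = x := by
        rw [mulVec_mulVec, Matrix.nonsing_inv_mul B hBdet, one_mulVec]
      rw [h, mulVec_zero] at this
      exact this.symm
    have := hΦ.dotProduct_mulVec_pos hBx
    have hrw : B * Φ * B = Bᴴ * Φ * B := by rw [hB.eq]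
    rw [hrw]
    simpa only [star_mulVec, dotProduct_mulVec, vecMul_vecMul] using this

private lemma ldtm_key {G : ℕ} (A : Matrix (Fin G) (Fin G) ℝ) (hA : A.PosDef) :
    Real.log A.det - A.trace ≤ -(G : ℝ) ∧
      (Real.log A.det - A.trace = -(G : ℝ) ↔ A = 1) := by
  classical
  set lam := hA.1.eigenvalues with hlamdef
  have hlampos : ∀ i, 0 < lam i := hA.eigenvalues_pos
  have hdet : A.det = ∏ i, lam i := by
    simpa using hA.1.det_eq_prod_eigenvalues
  have hU : (hA.1.eigenvectorUnitary : Matrix (Fin G) (Fin G) ℝ) *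
      star (hA.1.eigenvectorUnitary : Matrix (Fin G) (Fin G) ℝ) = 1 :=
    (Matrix.mem_unitaryGroup_iff).mp (hA.1.eigenvectorUnitary).2
  have hU' : star (hA.1.eigenvectorUnitary : Matrix (Fin G) (Fin G) ℝ) *
      (hA.1.eigenvectorUnitary : Matrix (Fin G) (Fin G) ℝ) = 1 :=
    (Matrix.mem_unitaryGroup_iff').mp (hA.1.eigenvectorUnitary).2
  have htr : A.trace = ∑ i, lam i := by
    conv_lhs => rw [hA.1.spectral_theorem, Unitary.conjStarAlgAut_apply]
    rw [Matrix.trace_mul_comm, ← mul_assoc, hU', one_mul, Matrix.trace_diagonal]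
    simp
    rfl
  have hlog : Real.log A.det = ∑ i, Real.log (lam i) := by
    rw [hdet, Real.log_prod (fun i _ => (hlampos i).ne')]
  have hsum : Real.log A.det - A.trace = ∑ i, (Real.log (lam i) - lam i) := by
    rw [hlog, htr, Finset.sum_sub_distrib]
  have hterm : ∀ i, Real.log (lam i) - lam i ≤ -1 := fun i => by
    have := Real.log_le_sub_one_of_pos (hlampos i); linarith
  have hle : Real.log A.det - A.trace ≤ -(G : ℝ) := by
    rw [hsum]
    calc ∑ i, (Real.log (lam i) - lam i) ≤ ∑ _i : Fin G, (-1 : ℝ) :=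
          Finset.sum_le_sum (fun i _ => hterm i)
      _ = -(G : ℝ) := by simp
  refine ⟨hle, ?_, ?_⟩
  · intro heq
    have hall : ∀ i, lam i = 1 := by
      by_contra hcon
      push_neg at hcon
      obtain ⟨i, hi⟩ := hcon
      have hstrict : ∑ j, (Real.log (lam j) - lam j) < ∑ _j : Fin G, (-1 : ℝ) := by
        refine Finset.sum_lt_sum (fun j _ => hterm j) ⟨i, Finset.mem_univ i, ?_⟩
        have := Real.log_lt_sub_one_of_pos (hlampos i) hi
        linarith
      rw [← hsum, heq] at hstrict
      simp at hstrict
    have hdiag : Matrix.diagonal (RCLike.ofReal ∘ lam) = (1 : Matrix (Fin G) (Fin G) ℝ) := by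
      have hf : (RCLike.ofReal ∘ lam : Fin G → ℝ) = 1 := funext fun i => by simpa using hall i
      rw [hf]; exact Matrix.diagonal_one
    calc A = (hA.1.eigenvectorUnitary : Matrix (Fin G) (Fin G) ℝ) *
          Matrix.diagonal (RCLike.ofReal ∘ lam) *
          star (hA.1.eigenvectorUnitary : Matrix (Fin G) (Fin G) ℝ) := hA.1.spectral_theorem
      _ = 1 := by rw [hdiag, mul_one, hU]
  · intro h
    subst h
    simp [Matrix.trace_one]

theorem log_det_trace_maximizer {G : ℕ} (S : Matrix (Fin G) (Fin G) ℝ) (hS : S.PosDef) :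
    (∀ Φ : Matrix (Fin G) (Fin G) ℝ, Φ.PosDef →
        Real.log Φ.det - (Φ * S).trace ≤
          Real.log (S⁻¹ : Matrix (Fin G) (Fin G) ℝ).det - (S⁻¹ * S).trace) ∧
    Real.log (S⁻¹ : Matrix (Fin G) (Fin G) ℝ).det - (S⁻¹ * S).trace =
      -Real.log S.det - G ∧
    (∀ Φ : Matrix (Fin G) (Fin G) ℝ, Φ.PosDef →
        (Real.log Φ.det - (Φ * S).trace = -Real.log S.det - G ↔ Φ = S⁻¹)) := by
  classical
  have hSdet : 0 < S.det := hS.det_pos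
  have hSunit : IsUnit S.det := (isUnit_iff_ne_zero).mpr hSdet.ne'
  open scoped MatrixOrder in
  set B := CFC.sqrt S with hBdef
  open scoped MatrixOrder in
  have hBps : B.PosSemidef := Matrix.nonneg_iff_posSemidef.mp (CFC.sqrt_nonneg S)
  open scoped MatrixOrder in
  have hBB : B * B = S := CFC.sqrt_mul_sqrt_self S hS.posSemidef.nonneg
  have hBdet2 : B.det * B.det = S.det := by rw [← Matrix.det_mul, hBB]
  have hBdet : IsUnit B.det := by
    refine (isUnit_iff_ne_zero).mpr fun h => ?_
    rw [h, zero_mul] at hBdet2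
    exact hSdet.ne hBdet2
  -- value at S⁻¹
  have hinvS : S⁻¹ * S = 1 := Matrix.nonsing_inv_mul S hSunit
  have hval : Real.log (S⁻¹ : Matrix (Fin G) (Fin G) ℝ).det - (S⁻¹ * S).trace =
      -Real.log S.det - G := by
    rw [hinvS, Matrix.trace_one, Matrix.det_nonsing_inv, Ring.inverse_eq_inv, Real.log_inv]
    simp
  -- transformation facts for arbitrary Φ
  have hmain : ∀ Φ : Matrix (Fin G) (Fin G) ℝ, Φ.PosDef →
      Real.log Φ.det - (Φ * S).trace =
        Real.log (B * Φ * B).det - (B * Φ * B).trace - Real.log S.det := by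
    intro Φ hΦ
    have hdetA : (B * Φ * B).det = S.det * Φ.det := by
      rw [Matrix.det_mul, Matrix.det_mul]
      rw [← hBdet2]; ring
    have htrA : (Φ * S).trace = (B * Φ * B).trace := by
      rw [← hBB, ← mul_assoc, Matrix.trace_mul_comm (Φ * B) B, ← mul_assoc]
    rw [hdetA, htrA, Real.log_mul hSdet.ne' hΦ.det_pos.ne']
    ring
  have hconj : ∀ Φ : Matrix (Fin G) (Fin G) ℝ, Φ.PosDef → (B * Φ * B).PosDef :=
    fun Φ hΦ => ldtm_posDef_conj hΦ hBps.1 hBdet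
  have hiff : ∀ Φ : Matrix (Fin G) (Fin G) ℝ, (B * Φ * B = 1 ↔ Φ = S⁻¹) := by
    intro Φ
    constructor
    · intro h
      have e1 : B⁻¹ * (B * Φ * B) * B⁻¹ = Φ := by
        rw [mul_assoc B Φ B, ← mul_assoc B⁻¹ B (Φ * B), Matrix.nonsing_inv_mul B hBdet,
          one_mul, mul_assoc, Matrix.mul_nonsing_inv B hBdet, mul_one]
      rw [← e1, h, mul_one, ← Matrix.mul_inv_rev, hBB]
    · intro h
      subst h
      rw [← hBB, Matrix.mul_inv_rev, ← mul_assoc B B⁻¹ B⁻¹,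
        Matrix.mul_nonsing_inv B hBdet, one_mul, Matrix.nonsing_inv_mul B hBdet]
  refine ⟨?_, hval, ?_⟩
  · intro Φ hΦ
    rw [hval, hmain Φ hΦ]
    have := (ldtm_key (B * Φ * B) (hconj Φ hΦ)).1
    linarith
  · intro Φ hΦ
    rw [hmain Φ hΦ]
    constructor
    · intro h
      have h' : Real.log (B * Φ * B).det - (B * Φ * B).trace = -(G : ℝ) := by linarith
      exact (hiff Φ).mp (((ldtm_key (B * Φ * B) (hconj Φ hΦ)).2).mp h')
    · intro h
      have h1 : B * Φ * B = 1 := (hiff Φ).mpr h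
      have := ((ldtm_key (B * Φ * B) (hconj Φ hΦ)).2).mpr h1
      linarith
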